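/- arXiv:2003.06735 — 4 statements merged into one kernel-verified Lean document; each statement's English description precedes it below -/
import Mathlib

section
/- Let F be the CDF of a probability measure supported on [a,b] and fix ρ with 0 < ρ ≤ min{∫_a^b F(t)dt, ∫_a^b (1−F(t))dt}. Define the upper envelope 𝓕ᵘᵖ_ρ[F](t) = 0 for t < a, 𝓕ᵘᵖ_ρ[F](t) = sup{z ∈ [F(t),1] | ∫_{F(t)}^z (F⁻¹(y)−t)dy ≤ ρ} for a ≤ t < tᵘᵖ, and 𝓕ᵘᵖ_ρ[F](t) = 1 for t ≥ tᵘᵖ, where tᵘᵖ = sup{τ ∈ [a,b] | ∫_τ^b (1−F(t))dt ≥ ρ}. Then 𝓕ᵘᵖ_ρ[F] is monotone increasing on ℝ. -/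
open MeasureTheory

/-- The generalized inverse `F⁻¹(y) = inf {t | F(t) > y}` of a CDF `F`. -/
noncomputable def genInv (F : ℝ → ℝ) (y : ℝ) : ℝ := sInf {t : ℝ | F t > y}

/-- `tᵘᵖ = sup {τ ∈ [a,b] | ∫_τ^b (1 - F(s)) ds ≥ ρ}`. -/
noncomputable def tUp (F : ℝ → ℝ) (a b ρ : ℝ) : ℝ :=
  sSup {τ : ℝ | τ ∈ Set.Icc a b ∧ ρ ≤ ∫ s in τ..b, (1 - F s)}

/-- The upper CDF envelope `𝓕ᵘᵖ_ρ[F]` of `F` at 1-Wasserstein distance `ρ`. -/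
noncomputable def upperEnv (F : ℝ → ℝ) (a b ρ : ℝ) (t : ℝ) : ℝ :=
  if t < a then 0
  else if t < tUp F a b ρ then
    sSup {z : ℝ | z ∈ Set.Icc (F t) 1 ∧ ∫ y in (F t)..z, (genInv F y - t) ≤ ρ}
  else 1

/-- A modification of `genInv` that is monotone on all of `[0,1]`. -/
noncomputable def gAux (F : ℝ → ℝ) (b : ℝ) (y : ℝ) : ℝ := if y < 1 then genInv F y else b

/-- The upper CDF envelope `𝓕ᵘᵖ_ρ[F]` of a CDF `F` of a measure supported on `[a,b]`,
with `0 < ρ ≤ min {∫_a^b F, ∫_a^b (1-F)}`, is monotone increasing on `ℝ`. -/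
theorem upperEnv_monotone (F : ℝ → ℝ) (a b ρ : ℝ) (hab : a ≤ b)
    (hmono : Monotone F)
    (hrc : ∀ t, ContinuousWithinAt F (Set.Ici t) t)
    (h0 : ∀ t, t < a → F t = 0) (h1 : ∀ t, b ≤ t → F t = 1)
    (hρ : 0 < ρ)
    (hρ' : ρ ≤ min (∫ s in a..b, F s) (∫ s in a..b, (1 - F s))) :
    Monotone (upperEnv F a b ρ) := by
  have hFb : F b = 1 := h1 b le_rfl
  have hF0 : ∀ t, 0 ≤ F t := by
    intro t
    rcases lt_or_ge t a with h | h
    · exact (h0 t h).ge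
    · have h' := h0 (a - 1) (by linarith)
      calc (0:ℝ) = F (a-1) := h'.symm
        _ ≤ F t := hmono (by linarith)
  have hF1 : ∀ t, F t ≤ 1 := by
    intro t
    rcases le_or_gt t b with h | h
    · calc F t ≤ F b := hmono h
        _ = 1 := hFb
    · exact (h1 t h.le).le
  -- basic facts about genInv
  have hne : ∀ y : ℝ, y < 1 → ({t : ℝ | F t > y}).Nonempty := by
    intro y hy
    exact ⟨b, by simpa [hFb] using hy⟩
  have hbddb : ∀ y : ℝ, 0 ≤ y → BddBelow {t : ℝ | F t > y} := by
    intro y hy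
    refine ⟨a, fun s hs => ?_⟩
    by_contra h
    push_neg at h
    have h' := h0 s h
    simp only [Set.mem_setOf_eq, h'] at hs
    linarith
  have hgi_ub : ∀ y : ℝ, 0 ≤ y → y < 1 → genInv F y ≤ b := by
    intro y hy0 hy1
    exact csInf_le (hbddb y hy0) (by simpa [Set.mem_setOf_eq, hFb] using hy1)
  have hgi_mono : ∀ y₁ y₂ : ℝ, 0 ≤ y₁ → y₁ ≤ y₂ → y₂ < 1 →
      genInv F y₁ ≤ genInv F y₂ := by
    intro y₁ y₂ h0' h12 h2
    exact csInf_le_csInf (hbddb y₁ h0') (hne y₂ h2)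
      (fun s hs => lt_of_le_of_lt h12 hs)
  have hgi_ge : ∀ t y : ℝ, F t ≤ y → y < 1 → t ≤ genInv F y := by
    intro t y hFt hy1
    refine le_csInf (hne y hy1) (fun s hs => ?_)
    by_contra hc
    push_neg at hc
    have : F s ≤ F t := hmono hc.le
    simp only [Set.mem_setOf_eq] at hs
    linarith
  -- facts about gAux
  have hg_mono : MonotoneOn (gAux F b) (Set.Icc (0:ℝ) 1) := by
    intro y₁ hy₁ y₂ hy₂ h12
    rcases lt_or_ge y₂ 1 with h2 | h2
    · have h1' : y₁ < 1 := lt_of_le_of_lt h12 h2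
      simp only [gAux, if_pos h1', if_pos h2]
      exact hgi_mono y₁ y₂ hy₁.1 h12 h2
    · have hy2 : ¬ y₂ < 1 := not_lt.mpr h2
      simp only [gAux, if_neg hy2]
      rcases lt_or_ge y₁ 1 with h1' | h1'
      · simp only [if_pos h1']
        exact hgi_ub y₁ hy₁.1 h1'
      · simp only [if_neg (not_lt.mpr h1')]
        exact le_rfl
  have hg_ge : ∀ t y : ℝ, t ≤ b → F t ≤ y → t ≤ gAux F b y := by
    intro t y htb hFt
    rcases lt_or_ge y 1 with hy | hy
    · simpa only [gAux, if_pos hy] using hgi_ge t y hFt hy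
    · simpa only [gAux, if_neg (not_lt.mpr hy)] using htb
  have hg_intg : ∀ c z t : ℝ, 0 ≤ c → c ≤ 1 → 0 ≤ z → z ≤ 1 →
      IntervalIntegrable (fun y => gAux F b y - t) volume c z := by
    intro c z t hc0 hc1 hz0 hz1
    have hsub : Set.uIcc c z ⊆ Set.Icc (0:ℝ) 1 := by
      rw [Set.uIcc]
      exact Set.Icc_subset_Icc (le_min hc0 hz0) (max_le hc1 hz1)
    exact ((hg_mono.mono hsub).intervalIntegrable).sub intervalIntegrable_const
  -- integral congruence genInv → gAux
  have hcongr : ∀ c z t : ℝ, c ≤ 1 → z ≤ 1 →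
      (∫ y in c..z, (genInv F y - t)) = ∫ y in c..z, (gAux F b y - t) := by
    intro c z t hc hz
    refine intervalIntegral.integral_congr_ae ?_
    have h1' : ∀ᵐ y : ℝ ∂volume, y ≠ 1 := by
      have hv : volume ({(1:ℝ)} : Set ℝ) = 0 := Real.volume_singleton
      rw [ae_iff]
      convert hv using 2
      ext y
      simp
    filter_upwards [h1'] with y hy hymem
    have hlt : y < 1 := lt_of_le_of_ne (hymem.2.trans (max_le hc hz)) hy
    simp only [gAux, if_pos hlt]
  -- facts about tUp
  have hamem : a ∈ {τ : ℝ | τ ∈ Set.Icc a b ∧ ρ ≤ ∫ s in τ..b, (1 - F s)} :=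
    ⟨⟨le_rfl, hab⟩, le_trans hρ' (min_le_right _ _)⟩
  have htUp_lb : a ≤ tUp F a b ρ :=
    le_csSup ⟨b, fun x hx => hx.1.2⟩ hamem
  have htUp_ub : tUp F a b ρ ≤ b :=
    csSup_le ⟨a, hamem⟩ fun x hx => hx.1.2
  -- the sets S t
  set S : ℝ → Set ℝ := fun t =>
    {z : ℝ | z ∈ Set.Icc (F t) 1 ∧ ∫ y in (F t)..z, (genInv F y - t) ≤ ρ} with hS
  have hS_mem : ∀ t, F t ∈ S t := by
    intro t
    refine ⟨⟨le_rfl, hF1 t⟩, ?_⟩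
    rw [intervalIntegral.integral_same]
    exact hρ.le
  have hS_bdd : ∀ t, BddAbove (S t) := fun t => ⟨1, fun z hz => hz.1.2⟩
  have hS_le_one : ∀ t, sSup (S t) ≤ 1 := fun t =>
    csSup_le ⟨F t, hS_mem t⟩ fun z hz => hz.1.2
  have hS_nonneg : ∀ t, 0 ≤ sSup (S t) := fun t =>
    le_trans (hF0 t) (le_csSup (hS_bdd t) (hS_mem t))
  -- main proof
  intro t₁ t₂ h12
  rcases lt_or_ge t₂ a with ht2a | ht2a
  · have ht1a : t₁ < a := lt_of_le_of_lt h12 ht2a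
    simp [upperEnv, if_pos ht1a, if_pos ht2a]
  · rcases lt_or_ge t₁ a with ht1a | ht1a
    · -- upperEnv t₁ = 0
      rw [upperEnv, if_pos ht1a, upperEnv, if_neg (not_lt.mpr ht2a)]
      rcases lt_or_ge t₂ (tUp F a b ρ) with h | h
      · rw [if_pos h]; exact hS_nonneg t₂
      · rw [if_neg (not_lt.mpr h)]; exact zero_le_one
    · rcases lt_or_ge t₁ (tUp F a b ρ) with ht1u | ht1u
      · rcases lt_or_ge t₂ (tUp F a b ρ) with ht2u | ht2u
        · -- main case
          rw [upperEnv, if_neg (not_lt.mpr ht1a), if_pos ht1u,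
            upperEnv, if_neg (not_lt.mpr ht2a), if_pos ht2u]
          refine csSup_le ⟨F t₁, hS_mem t₁⟩ (fun z hz => ?_)
          rcases le_or_gt z (F t₂) with hzF | hzF
          · exact le_trans hzF (le_csSup (hS_bdd t₂) (hS_mem t₂))
          · refine le_csSup (hS_bdd t₂) ?_
            obtain ⟨⟨hz1, hz2⟩, hzint⟩ := hz
            refine ⟨⟨hzF.le, hz2⟩, ?_⟩
            have ht1b : t₁ ≤ b := le_trans ht1u.le htUp_ub
            have hc1 : (0:ℝ) ≤ F t₁ := hF0 t₁
            have hc2 : F t₁ ≤ F t₂ := hmono h12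
            have hc3 : F t₂ ≤ z := hzF.le
            have hi1 : IntervalIntegrable (fun y => gAux F b y - t₁) volume (F t₁) (F t₂) :=
              hg_intg _ _ _ hc1 (hF1 t₁) (hF0 t₂) (hF1 t₂)
            have hi2 : IntervalIntegrable (fun y => gAux F b y - t₁) volume (F t₂) z :=
              hg_intg _ _ _ (hF0 t₂) (hF1 t₂) (le_trans hc1 (le_trans hc2 hc3)) hz2
            have hi3 : IntervalIntegrable (fun y => gAux F b y - t₂) volume (F t₂) z :=
              hg_intg _ _ _ (hF0 t₂) (hF1 t₂) (le_trans hc1 (le_trans hc2 hc3)) hz2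
            rw [hcongr _ _ _ (hF1 t₂) hz2]
            rw [hcongr _ _ _ (hF1 t₁) hz2] at hzint
            have hadd : (∫ y in (F t₁)..(F t₂), (gAux F b y - t₁)) +
                (∫ y in (F t₂)..z, (gAux F b y - t₁)) =
                ∫ y in (F t₁)..z, (gAux F b y - t₁) :=
              intervalIntegral.integral_add_adjacent_intervals hi1 hi2
            have hnn : 0 ≤ ∫ y in (F t₁)..(F t₂), (gAux F b y - t₁) := by
              refine intervalIntegral.integral_nonneg hc2 (fun u hu => ?_)
              have : t₁ ≤ gAux F b u := hg_ge t₁ u ht1b hu.1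
              linarith
            have hmono' : (∫ y in (F t₂)..z, (gAux F b y - t₂)) ≤
                ∫ y in (F t₂)..z, (gAux F b y - t₁) := by
              refine intervalIntegral.integral_mono_on hc3 hi3 hi2 (fun u _ => ?_)
              linarith
            linarith
        · -- upperEnv t₂ = 1
          rw [upperEnv, if_neg (not_lt.mpr ht1a), if_pos ht1u,
            upperEnv, if_neg (not_lt.mpr ht2a), if_neg (not_lt.mpr ht2u)]
          exact hS_le_one t₁
      · -- both ≥ tUp : both are 1
        have ht2u : ¬ t₂ < tUp F a b ρ := not_lt.mpr (le_trans ht1u h12)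
        rw [upperEnv, if_neg (not_lt.mpr ht1a), if_neg (not_lt.mpr ht1u),
          upperEnv, if_neg (not_lt.mpr ht2a), if_neg ht2u]
end

section
/- Let F be the CDF of a probability measure supported on [a,b], fix ρ > 0 with ρ ≤ min{∫_a^b F(t)dt, ∫_a^b (1−F(t))dt}, and let 𝓕ᵘᵖ_ρ[F] be the upper CDF envelope at distance ρ. Then for any CDF F' of a measure supported on [a,b] satisfying W₁(F, F') ≤ ρ, it holds that F'(t) ≤ 𝓕ᵘᵖ_ρ[F](t) for all t ∈ ℝ. -/
open MeasureTheory Set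

lemma vol_squeeze {A : Set ℝ} {u v : ℝ} (h1 : Set.Ioo u v ⊆ A) (h2 : A ⊆ Set.Icc u v) :
    volume A = ENNReal.ofReal (v - u) := by
  apply le_antisymm
  · calc volume A ≤ volume (Set.Icc u v) := measure_mono h2
      _ = ENNReal.ofReal (v - u) := Real.volume_Icc
  · calc ENNReal.ofReal (v - u) = volume (Set.Ioo u v) := Real.volume_Ioo.symm
      _ ≤ volume A := measure_mono h1

lemma key_integral_le (F F' : ℝ → ℝ) (b ρ : ℝ)
    (hmono : Monotone F) (h1 : ∀ t, b ≤ t → F t = 1)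
    (hmono' : Monotone F')
    (hF0 : ∀ s, 0 ≤ F s) (hF'1 : ∀ s, F' s ≤ 1)
    (hint : Integrable (fun s => |F s - F' s|))
    (hW : ∫ s, |F s - F' s| ≤ ρ)
    (t : ℝ) (hcd : F t ≤ F' t) :
    ∫ y in (F t)..(F' t), (genInv F y - t) ≤ ρ := by
  set c := F t with hc
  set d := F' t with hd
  have hd1 : d ≤ 1 := hF'1 t
  rw [intervalIntegral.integral_of_le hcd, MeasureTheory.integral_Ioc_eq_integral_Ioo]
  set E : Set (ℝ × ℝ) := {p | F p.2 ≤ p.1} with hE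
  have hEmeas : MeasurableSet E :=
    measurableSet_le (hmono.measurable.comp measurable_snd) measurable_fst
  haveI hfin1 : IsFiniteMeasure (volume.restrict (Set.Ioo c d)) :=
    ⟨by rw [Measure.restrict_apply_univ, Real.volume_Ioo]; exact ENNReal.ofReal_lt_top⟩
  haveI hfin2 : IsFiniteMeasure (volume.restrict (Set.Ioc t b)) :=
    ⟨by rw [Measure.restrict_apply_univ, Real.volume_Ioc]; exact ENNReal.ofReal_lt_top⟩
  have step1 : ∫ y in Set.Ioo c d, (genInv F y - t)
      = ∫ y in Set.Ioo c d, ∫ s in Set.Ioc t b, E.indicator (fun _ => (1:ℝ)) (y, s) := by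
    apply setIntegral_congr_fun measurableSet_Ioo
    intro y hy
    have hyc : c ≤ y := hy.1.le
    have hy1 : y < 1 := lt_of_lt_of_le hy.2 hd1
    have hbT : b ∈ {s : ℝ | F s > y} := by
      simp only [Set.mem_setOf_eq, h1 b le_rfl]; exact hy1
    have hlb : ∀ s ∈ {s : ℝ | F s > y}, t ≤ s := by
      intro s hs
      by_contra h
      push_neg at h
      exact absurd hs (not_lt.2 ((hmono h.le).trans hyc))
    have hBdd : BddBelow {s : ℝ | F s > y} := ⟨t, hlb⟩
    have htg : t ≤ genInv F y := le_csInf ⟨b, hbT⟩ hlb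
    have hgb : genInv F y ≤ b := csInf_le hBdd hbT
    have hAy : MeasurableSet {s : ℝ | F s ≤ y} :=
      measurableSet_le hmono.measurable measurable_const
    have hvol : volume (Set.Ioc t b ∩ {s : ℝ | F s ≤ y}) = ENNReal.ofReal (genInv F y - t) := by
      apply vol_squeeze
      · intro s hs
        refine ⟨⟨hs.1, hs.2.le.trans hgb⟩, ?_⟩
        by_contra hFs
        simp only [Set.mem_setOf_eq, not_le] at hFs
        exact absurd (csInf_le hBdd hFs) (not_le.2 hs.2)
      · intro s hs
        refine ⟨hs.1.1.le, ?_⟩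
        apply le_csInf ⟨b, hbT⟩
        intro u hu
        by_contra h
        push_neg at h
        exact absurd hu (not_lt.2 ((hmono h.le).trans hs.2))
    have heq : ∀ s : ℝ, E.indicator (fun _ => (1:ℝ)) (y, s)
        = Set.indicator {s : ℝ | F s ≤ y} (fun _ => (1:ℝ)) s := by
      intro s
      simp [Set.indicator_apply, hE, Set.mem_setOf_eq]
    simp only [heq]
    rw [MeasureTheory.setIntegral_indicator hAy, MeasureTheory.setIntegral_const, measureReal_def, hvol,
      smul_eq_mul, mul_one, ENNReal.toReal_ofReal (sub_nonneg.2 htg)]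
  rw [step1]
  have hIntProd : Integrable (Function.uncurry fun y s => E.indicator (fun _ => (1:ℝ)) (y, s))
      ((volume.restrict (Set.Ioo c d)).prod (volume.restrict (Set.Ioc t b))) := by
    have : (Function.uncurry fun y s => E.indicator (fun _ => (1:ℝ)) (y, s))
        = E.indicator (fun _ => (1:ℝ)) := rfl
    rw [this]
    exact (integrable_const (1:ℝ)).indicator hEmeas
  rw [MeasureTheory.integral_integral_swap hIntProd]
  have step3 : ∫ s in Set.Ioc t b, ∫ y in Set.Ioo c d, E.indicator (fun _ => (1:ℝ)) (y, s)
      ≤ ∫ s in Set.Ioc t b, |F s - F' s| := by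
    have hcomp : ∀ s ∈ Set.Ioc t b,
        (∫ y in Set.Ioo c d, E.indicator (fun _ => (1:ℝ)) (y, s)) = max (d - F s) 0 := by
      intro s hs
      have hcs : c ≤ F s := hmono hs.1.le
      have heq : ∀ y : ℝ, E.indicator (fun _ => (1:ℝ)) (y, s)
          = Set.indicator (Set.Ici (F s)) (fun _ => (1:ℝ)) y := by
        intro y
        simp [Set.indicator_apply, hE, Set.mem_setOf_eq, Set.mem_Ici]
      simp only [heq]
      rw [MeasureTheory.setIntegral_indicator measurableSet_Ici, MeasureTheory.setIntegral_const,
        smul_eq_mul, mul_one]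
      have hvol2 : volume (Set.Ioo c d ∩ Set.Ici (F s)) = ENNReal.ofReal (d - F s) := by
        apply vol_squeeze
        · intro x hx
          exact ⟨⟨lt_of_le_of_lt hcs hx.1, hx.2⟩, le_of_lt hx.1⟩
        · intro x hx
          exact ⟨hx.2, hx.1.2.le⟩
      rw [measureReal_def, hvol2, ENNReal.toReal_ofReal']
    rw [setIntegral_congr_fun measurableSet_Ioc hcomp]
    apply setIntegral_mono_on
    · apply Integrable.mono' (integrable_const (1:ℝ))
      · exact ((measurable_const.sub hmono.measurable).max measurable_const).aestronglyMeasurable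
      · filter_upwards with s
        rw [Real.norm_eq_abs, abs_of_nonneg (le_max_right _ _)]
        exact max_le (by linarith [hF0 s]) zero_le_one
    · exact hint.integrableOn
    · exact measurableSet_Ioc
    · intro s hs
      apply max_le
      · have : d ≤ F' s := hmono' hs.1.le
        calc d - F s ≤ F' s - F s := by linarith
          _ ≤ |F' s - F s| := le_abs_self _
          _ = |F s - F' s| := abs_sub_comm _ _
      · exact abs_nonneg _
  refine step3.trans ((setIntegral_le_integral hint ?_).trans hW)
  filter_upwards with s using abs_nonneg _

/-- If `F` is the CDF of a measure supported on `[a,b]`,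
`0 < ρ ≤ min {∫_a^b F, ∫_a^b (1-F)}`, and `F'` is the CDF of another measure supported on
`[a,b]` with `W₁(F, F') = ∫_ℝ |F - F'| ≤ ρ`, then `F'(t) ≤ 𝓕ᵘᵖ_ρ[F](t)` for all `t`. -/
theorem le_upperEnv_of_wasserstein_le (F F' : ℝ → ℝ) (a b ρ : ℝ) (hab : a ≤ b)
    (hmono : Monotone F)
    (hrc : ∀ t, ContinuousWithinAt F (Set.Ici t) t)
    (h0 : ∀ t, t < a → F t = 0) (h1 : ∀ t, b ≤ t → F t = 1)
    (hmono' : Monotone F')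
    (hrc' : ∀ t, ContinuousWithinAt F' (Set.Ici t) t)
    (h0' : ∀ t, t < a → F' t = 0) (h1' : ∀ t, b ≤ t → F' t = 1)
    (hρ : 0 < ρ)
    (hρ' : ρ ≤ min (∫ s in a..b, F s) (∫ s in a..b, (1 - F s)))
    (hW : ∫ s, |F s - F' s| ≤ ρ) :
    ∀ t, F' t ≤ upperEnv F a b ρ t := by
  have hF0 : ∀ s, 0 ≤ F s := by
    intro s
    rcases lt_or_ge s a with h | h
    · exact (h0 s h).ge
    · calc (0:ℝ) = F (a - 1) := (h0 _ (by linarith)).symm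
        _ ≤ F s := hmono (by linarith)
  have hF1 : ∀ s, F s ≤ 1 := by
    intro s
    rcases le_or_gt b s with h | h
    · exact (h1 s h).le
    · calc F s ≤ F b := hmono h.le
        _ = 1 := h1 b le_rfl
  have hF'0 : ∀ s, 0 ≤ F' s := by
    intro s
    rcases lt_or_ge s a with h | h
    · exact (h0' s h).ge
    · calc (0:ℝ) = F' (a - 1) := (h0' _ (by linarith)).symm
        _ ≤ F' s := hmono' (by linarith)
  have hF'1 : ∀ s, F' s ≤ 1 := by
    intro s
    rcases le_or_gt b s with h | h
    · exact (h1' s h).le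
    · calc F' s ≤ F' b := hmono' h.le
        _ = 1 := h1' b le_rfl
  have hint : Integrable (fun s => |F s - F' s|) := by
    apply Integrable.mono' (g := Set.indicator (Set.Ico a b) (fun _ => (1:ℝ)))
    · rw [integrable_indicator_iff measurableSet_Ico]
      exact integrableOn_const (by rw [Real.volume_Ico]; exact ENNReal.ofReal_lt_top.ne)
    · exact ((hmono.measurable.sub hmono'.measurable).abs).aestronglyMeasurable
    · filter_upwards with s
      rw [Real.norm_eq_abs, abs_abs]
      rcases lt_or_ge s a with hsa | hsa
      · simp only [h0 s hsa, h0' s hsa, sub_zero, abs_zero]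
        exact Set.indicator_nonneg (fun _ _ => zero_le_one) s
      · rcases le_or_gt b s with hbs | hbs
        · simp only [h1 s hbs, h1' s hbs, sub_self, abs_zero]
          exact Set.indicator_nonneg (fun _ _ => zero_le_one) s
        · have : s ∈ Set.Ico a b := ⟨hsa, hbs⟩
          rw [Set.indicator_of_mem this]
          rw [abs_le]
          constructor <;> [linarith [hF0 s, hF'1 s]; linarith [hF1 s, hF'0 s]]
  intro t
  unfold upperEnv
  split_ifs with h1t h2t
  · exact le_of_eq (h0' t h1t)
  · have hBdd : BddAbove {z : ℝ | z ∈ Set.Icc (F t) 1 ∧ ∫ y in (F t)..z, (genInv F y - t) ≤ ρ} :=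
      ⟨1, fun z hz => hz.1.2⟩
    rcases le_total (F' t) (F t) with hle | hge
    · refine hle.trans (le_csSup hBdd ⟨⟨le_rfl, hF1 t⟩, ?_⟩)
      rw [intervalIntegral.integral_same]
      exact hρ.le
    · exact le_csSup hBdd ⟨⟨hge, hF'1 t⟩,
        key_integral_le F F' b ρ hmono h1 hmono' hF0 hF'1 hint hW t hge⟩
  · exact hF'1 t
end

section
/- Let F be the CDF of a probability measure supported on [a,b], fix ρ > 0 with ρ ≤ min{∫_a^b F(t)dt, ∫_a^b (1−F(t))dt}, and let 𝓕ˡᵒʷ_ρ[F] be the lower CDF envelope at distance ρ. Then for any CDF F' of a measure supported on [a,b] satisfying W₁(F, F') ≤ ρ, it holds that 𝓕ˡᵒʷ_ρ[F](t) ≤ F'(t) for all t ∈ ℝ. -/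
open MeasureTheory

/-- `tˡᵒʷ = inf {τ ∈ [a,b] | ∫_a^τ F(s) ds ≥ ρ}`. -/
noncomputable def tLow (F : ℝ → ℝ) (a b ρ : ℝ) : ℝ :=
  sInf {τ : ℝ | τ ∈ Set.Icc a b ∧ ρ ≤ ∫ s in a..τ, F s}

/-- The lower CDF envelope `𝓕ˡᵒʷ_ρ[F]` of `F` at 1-Wasserstein distance `ρ`. -/
noncomputable def lowerEnv (F : ℝ → ℝ) (a b ρ : ℝ) (t : ℝ) : ℝ :=
  if t < tLow F a b ρ then 0
  else if t < b then
    sInf {z : ℝ | z ∈ Set.Icc 0 (F t) ∧ ∫ y in z..(F t), (t - genInv F y) ≤ ρ}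
  else 1

lemma key_integral_bound (F F' : ℝ → ℝ) (a b ρ t : ℝ)
    (hmono : Monotone F) (hmono' : Monotone F')
    (h0 : ∀ s, s < a → F s = 0) (h1 : ∀ s, b ≤ s → F s = 1)
    (h0' : ∀ s, s < a → F' s = 0) (h1' : ∀ s, b ≤ s → F' s = 1)
    (hρ : 0 < ρ) (hW : ∫ s, |F s - F' s| ≤ ρ) (hcd : F' t ≤ F t) :
    ∫ y in (F' t)..(F t), (t - genInv F y) ≤ ρ := by
  set c := F' t with hc
  set d := F t with hd
  -- basic positivity facts
  have hF'0 : ∀ s, 0 ≤ F' s := by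
    intro s
    have h := h0' (min s a - 1) (by have := min_le_right s a; linarith)
    have : F' (min s a - 1) ≤ F' s := hmono' (by have := min_le_left s a; linarith)
    linarith
  have hF0 : ∀ s, 0 ≤ F s := by
    intro s
    have h := h0 (min s a - 1) (by have := min_le_right s a; linarith)
    have : F (min s a - 1) ≤ F s := hmono (by have := min_le_left s a; linarith)
    linarith
  have hF1 : ∀ s, F s ≤ 1 := by
    intro s
    have h := h1 (max s b) (le_max_right s b)
    have : F s ≤ F (max s b) := hmono (le_max_left s b)
    linarith
  have hF'1 : ∀ s, F' s ≤ 1 := by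
    intro s
    have h := h1' (max s b) (le_max_right s b)
    have : F' s ≤ F' (max s b) := hmono' (le_max_left s b)
    linarith
  have hc0 : 0 ≤ c := hF'0 t
  -- facts about genInv on Ioo c d
  have hbdd : ∀ y : ℝ, 0 ≤ y → BddBelow {u : ℝ | F u > y} := by
    intro y hy
    refine ⟨a, fun u hu => ?_⟩
    by_contra h
    push_neg at h
    have := h0 u h
    simp only [Set.mem_setOf_eq, this] at hu
    linarith
  have hne : ∀ y : ℝ, y < d → t ∈ {u : ℝ | F u > y} := fun y hy => hy
  have hgen_le : ∀ y ∈ Set.Ioo c d, genInv F y ≤ t := by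
    intro y hy
    exact csInf_le (hbdd y (hc0.trans hy.1.le)) (hne y hy.2)
  -- the Fubini set
  set A : Set (ℝ × ℝ) := {p : ℝ × ℝ | p.1 ∈ Set.Ioo c d ∧ genInv F p.1 < p.2 ∧ p.2 < t} with hA
  have hA_eq : A = ⋃ q : ℚ, ((Set.Ioo c d ∩ Set.Iio (F q)) ×ˢ Set.Ioo (q : ℝ) t) := by
    ext ⟨y, s⟩
    simp only [hA, Set.mem_setOf_eq, Set.mem_iUnion, Set.mem_prod, Set.mem_inter_iff,
      Set.mem_Iio, Set.mem_Ioo]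
    constructor
    · rintro ⟨hy, hgs, hst⟩
      obtain ⟨u, hu, hus⟩ := exists_lt_of_csInf_lt ⟨t, hne y hy.2⟩ hgs
      obtain ⟨q, hq1, hq2⟩ := exists_rat_btwn hus
      exact ⟨q, ⟨hy, lt_of_lt_of_le hu (hmono hq1.le)⟩, hq2, hst⟩
    · rintro ⟨q, ⟨hy, hyq⟩, hqs, hst⟩
      refine ⟨hy, lt_of_le_of_lt (csInf_le (hbdd y ((hF'0 t).trans hy.1.le)) hyq) hqs, hst⟩
  have hA_meas : MeasurableSet A := by
    rw [hA_eq]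
    exact MeasurableSet.iUnion fun q =>
      (measurableSet_Ioo.inter measurableSet_Iio).prod measurableSet_Ioo
  -- first slicing
  have hprod1 : (volume.prod volume) A
      = ∫⁻ y in Set.Ioo c d, ENNReal.ofReal (t - genInv F y) := by
    rw [Measure.prod_apply hA_meas, ← lintegral_indicator measurableSet_Ioo]
    refine lintegral_congr fun y => ?_
    by_cases hy : y ∈ Set.Ioo c d
    · rw [Set.indicator_of_mem hy]
      have hpre : Prod.mk y ⁻¹' A = Set.Ioo (genInv F y) t := by
        ext s
        simp [hA, Set.mem_Ioo, hy.1, hy.2]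
      rw [hpre, Real.volume_Ioo]
    · rw [Set.indicator_of_notMem hy]
      have hpre : Prod.mk y ⁻¹' A = ∅ := by
        ext s
        simp only [hA, Set.mem_preimage, Set.mem_setOf_eq, Set.mem_empty_iff_false, iff_false,
          not_and]
        intro h _ _
        exact absurd h hy
      rw [hpre, measure_empty]
  -- integrability of |F - F'|
  have hint : Integrable (fun s => |F s - F' s|) volume := by
    have hg : Integrable ((Set.Icc a b).indicator fun _ => (1 : ℝ)) volume := by
      rw [integrable_indicator_iff measurableSet_Icc]
      exact (integrableOn_const_iff (C := (1 : ℝ))).mpr (Or.inr measure_Icc_lt_top)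
    refine hg.mono' ((hmono.measurable.sub hmono'.measurable).abs.aestronglyMeasurable) ?_
    refine Filter.Eventually.of_forall fun s => ?_
    rw [Real.norm_eq_abs, abs_abs]
    by_cases hs : s ∈ Set.Icc a b
    · rw [Set.indicator_of_mem hs]
      have := hF0 s; have := hF1 s; have := hF'0 s; have := hF'1 s
      rw [abs_le]; constructor <;> linarith
    · rw [Set.indicator_of_notMem hs]
      simp only [Set.mem_Icc, not_and_or, not_le] at hs
      rcases hs with hs | hs
      · rw [h0 s hs, h0' s hs]; simp
      · rw [h1 s hs.le, h1' s hs.le]; simp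
  -- second slicing
  have hprod2 : (volume.prod volume) A ≤ ENNReal.ofReal ρ := by
    rw [Measure.prod_apply_symm hA_meas]
    calc ∫⁻ s, volume ((fun y => (y, s)) ⁻¹' A)
        ≤ ∫⁻ s, ENNReal.ofReal (|F s - F' s|) := by
          refine lintegral_mono fun s => ?_
          by_cases hst : s < t
          · have hsub : ((fun y => (y, s)) ⁻¹' A) ⊆ Set.Ioo c (F s) := by
              intro y hy
              simp only [hA, Set.mem_preimage, Set.mem_setOf_eq, Set.mem_Ioo] at hy
              obtain ⟨⟨hyc, hyd⟩, hgs, _⟩ := hy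
              obtain ⟨u, hu, hus⟩ :=
                exists_lt_of_csInf_lt ⟨t, hne y hyd⟩ hgs
              exact ⟨hyc, lt_of_lt_of_le hu (hmono hus.le)⟩
            calc volume ((fun y => (y, s)) ⁻¹' A) ≤ volume (Set.Ioo c (F s)) :=
                  measure_mono hsub
              _ = ENNReal.ofReal (F s - c) := Real.volume_Ioo
              _ ≤ ENNReal.ofReal (|F s - F' s|) := by
                  refine ENNReal.ofReal_le_ofReal ?_
                  have hF's : F' s ≤ c := hmono' hst.le
                  rcases le_or_gt (F s) (F' s) with h | h
                  · have : F s - c ≤ 0 := by linarith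
                    exact this.trans (abs_nonneg _)
                  · rw [abs_of_pos (by linarith)]; linarith
          · have hsub : ((fun y => (y, s)) ⁻¹' A) = ∅ := by
              ext y
              simp only [hA, Set.mem_preimage, Set.mem_setOf_eq, Set.mem_empty_iff_false,
                iff_false]
              rintro ⟨_, _, h⟩
              exact hst h
            rw [hsub, measure_empty]
            exact zero_le
      _ = ENNReal.ofReal (∫ s, |F s - F' s|) :=
          (ofReal_integral_eq_lintegral_ofReal hint
            (Filter.Eventually.of_forall fun s => abs_nonneg _)).symm
      _ ≤ ENNReal.ofReal ρ := ENNReal.ofReal_le_ofReal hW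
  have hkey : ∫⁻ y in Set.Ioo c d, ENNReal.ofReal (t - genInv F y) ≤ ENNReal.ofReal ρ :=
    hprod1 ▸ hprod2
  -- back to the real integral
  by_cases hInt : IntervalIntegrable (fun y => t - genInv F y) volume c d
  · rw [intervalIntegral.integral_of_le hcd, MeasureTheory.integral_Ioc_eq_integral_Ioo]
    have hIntOn : IntegrableOn (fun y => t - genInv F y) (Set.Ioo c d) volume :=
      ((intervalIntegrable_iff_integrableOn_Ioc_of_le hcd).1 hInt).mono_set
        Set.Ioo_subset_Ioc_self
    rw [MeasureTheory.integral_eq_lintegral_of_nonneg_ae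
      ((ae_restrict_iff' measurableSet_Ioo).2 (Filter.Eventually.of_forall fun y hy =>
        sub_nonneg.2 (hgen_le y hy)))
      hIntOn.aestronglyMeasurable]
    exact ENNReal.toReal_le_of_le_ofReal hρ.le hkey
  · rw [intervalIntegral.integral_undef hInt]
    exact hρ.le

/-- If `F` is the CDF of a measure supported on `[a,b]`,
`0 < ρ ≤ min {∫_a^b F, ∫_a^b (1-F)}`, and `F'` is the CDF of another measure supported on
`[a,b]` with `W₁(F, F') = ∫_ℝ |F - F'| ≤ ρ`, then `𝓕ˡᵒʷ_ρ[F](t) ≤ F'(t)` for all `t`. -/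
theorem lowerEnv_le_of_wasserstein_le (F F' : ℝ → ℝ) (a b ρ : ℝ) (hab : a ≤ b)
    (hmono : Monotone F)
    (hrc : ∀ t, ContinuousWithinAt F (Set.Ici t) t)
    (h0 : ∀ t, t < a → F t = 0) (h1 : ∀ t, b ≤ t → F t = 1)
    (hmono' : Monotone F')
    (hrc' : ∀ t, ContinuousWithinAt F' (Set.Ici t) t)
    (h0' : ∀ t, t < a → F' t = 0) (h1' : ∀ t, b ≤ t → F' t = 1)
    (hρ : 0 < ρ)
    (hρ' : ρ ≤ min (∫ s in a..b, F s) (∫ s in a..b, (1 - F s)))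
    (hW : ∫ s, |F s - F' s| ≤ ρ) :
    ∀ t, lowerEnv F a b ρ t ≤ F' t := by
  intro t
  have hF'0 : ∀ s, 0 ≤ F' s := by
    intro s
    have h := h0' (min s a - 1) (by have := min_le_right s a; linarith)
    have : F' (min s a - 1) ≤ F' s := hmono' (by have := min_le_left s a; linarith)
    linarith
  have hF0 : ∀ s, 0 ≤ F s := by
    intro s
    have h := h0 (min s a - 1) (by have := min_le_right s a; linarith)
    have : F (min s a - 1) ≤ F s := hmono (by have := min_le_left s a; linarith)
    linarith
  unfold lowerEnv
  split_ifs with hl1 hl2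
  · exact hF'0 t
  · have hbddS : BddBelow {z : ℝ | z ∈ Set.Icc 0 (F t) ∧
        ∫ y in z..(F t), (t - genInv F y) ≤ ρ} := ⟨0, fun z hz => hz.1.1⟩
    rcases le_or_gt (F' t) (F t) with hle | hlt
    · exact csInf_le hbddS ⟨⟨hF'0 t, hle⟩,
        key_integral_bound F F' a b ρ t hmono hmono'
          (fun s hs => h0 s hs) (fun s hs => h1 s hs)
          (fun s hs => h0' s hs) (fun s hs => h1' s hs) hρ hW hle⟩
    · refine le_trans (csInf_le hbddS ⟨⟨hF0 t, le_refl _⟩, ?_⟩) hlt.le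
      rw [intervalIntegral.integral_same]
      exact hρ.le
  · rw [h1' t (not_lt.1 hl2)]
end

section
/- Let F be a CDF of a measure supported on [a,b] and define the reflection of F around the point ((a+b)/2, 1/2) by 𝓕ʳᵉᶠˡ[F](t) = 1 − F(a+b−t). Then for any y ∈ (0,1), the generalized inverse F⁻¹(1−y) = a + b − F̃ₗₑfₜ⁻¹(y), where F̃ = 𝓕ʳᵉᶠˡ[F] and F̃ₗₑfₜ⁻¹(y) = inf{t ∈ ℝ | F̃(t) ≥ y} is the left inverse. -/
/-- The left inverse `G⁻¹_left(y) = inf {t | G(t) ≥ y}` of a CDF `G`. -/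
noncomputable def leftInv (F : ℝ → ℝ) (y : ℝ) : ℝ := sInf {t : ℝ | F t ≥ y}

/-- For a CDF `F` of a measure supported on `[a,b]` and its reflection
`F̃(t) = 1 - F(a + b - t)` around the point `((a+b)/2, 1/2)`, for any `y ∈ (0,1)` we have
`F⁻¹(1 - y) = a + b - F̃⁻¹_left(y)`. -/
theorem genInv_reflection (F : ℝ → ℝ) (a b : ℝ) (hab : a ≤ b)
    (hmono : Monotone F)
    (hrc : ∀ t, ContinuousWithinAt F (Set.Ici t) t)
    (h0 : ∀ t, t < a → F t = 0) (h1 : ∀ t, b ≤ t → F t = 1)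
    (y : ℝ) (hy : y ∈ Set.Ioo (0 : ℝ) 1) :
    genInv F (1 - y) = a + b - leftInv (fun t => 1 - F (a + b - t)) y := by
  obtain ⟨hy0, hy1⟩ := hy
  set S : Set ℝ := {t : ℝ | F t > 1 - y} with hS
  set C : Set ℝ := {t : ℝ | F t ≤ 1 - y} with hCdef
  have hSne : S.Nonempty := ⟨b, by simp only [hS, Set.mem_setOf_eq, h1 b le_rfl]; linarith⟩
  have hSbdd : BddBelow S := ⟨a, fun s hs => by
    by_contra h; push_neg at h
    have h0s := h0 s h
    simp only [hS, Set.mem_setOf_eq] at hs; linarith⟩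
  have hCne : C.Nonempty := ⟨a - 1, by
    simp only [hCdef, Set.mem_setOf_eq, h0 (a - 1) (by linarith)]; linarith⟩
  have hCbdd : BddAbove C := ⟨b, fun t ht => by
    by_contra h; push_neg at h
    have h1t := h1 t h.le
    simp only [hCdef, Set.mem_setOf_eq] at ht; linarith⟩
  set c := sSup C with hc
  have hCS : ∀ u ∈ C, ∀ s ∈ S, u ≤ s := fun u hu s hs => by
    by_contra h; push_neg at h
    have := hmono h.le
    simp only [hCdef, Set.mem_setOf_eq] at hu
    simp only [hS, Set.mem_setOf_eq] at hs; linarith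
  have hkey : genInv F (1 - y) = c := by
    apply le_antisymm
    · by_contra h; push_neg at h
      obtain ⟨t, ht1, ht2⟩ := exists_between h
      have htS : t ∉ S := fun hts => absurd (csInf_le hSbdd hts) (not_le.2 ht2)
      have htC : t ∈ C := show F t ≤ 1 - y from not_lt.1 htS
      exact absurd (le_csSup hCbdd htC) (not_le.2 ht1)
    · exact le_csInf hSne fun s hs => csSup_le hCne fun u hu => hCS u hu s hs
  set T : Set ℝ := {t : ℝ | (fun t => 1 - F (a + b - t)) t ≥ y} with hTdef
  have hTmem : ∀ t, t ∈ T ↔ F (a + b - t) ≤ 1 - y := by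
    intro t; simp only [hTdef, Set.mem_setOf_eq]; constructor <;> intro h <;> linarith
  have hTne : T.Nonempty := ⟨b + 1, by
    rw [hTmem]
    rw [h0 (a + b - (b + 1)) (by linarith)]; linarith⟩
  have hTbdd : BddBelow T := ⟨a, fun t ht => by
    by_contra h; push_neg at h
    rw [hTmem] at ht
    rw [h1 (a + b - t) (by linarith)] at ht; linarith⟩
  have hkey2 : leftInv (fun t => 1 - F (a + b - t)) y = a + b - c := by
    apply le_antisymm
    · by_contra h; push_neg at h
      obtain ⟨t, ht1, ht2⟩ := exists_between h
      have hlt : a + b - t < c := by linarith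
      obtain ⟨u, hu, hu2⟩ := exists_lt_of_lt_csSup hCne hlt
      have htT : t ∈ T := by
        rw [hTmem]
        calc F (a + b - t) ≤ F u := hmono hu2.le
          _ ≤ 1 - y := hu
      exact absurd (csInf_le hTbdd htT) (not_le.2 ht2)
    · refine le_csInf hTne fun t ht => ?_
      rw [hTmem] at ht
      have : a + b - t ≤ c := le_csSup hCbdd ht
      linarith
  rw [hkey, hkey2]; ring
end
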